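/- Let C be a compact metric space and let X ⊆ C × [0,1] be a blade space over C. Let Y be a metric space, let A, B be nonempty disjoint closed subsets of Y with d(A,B) > 0, and let φ : X → Y be continuous. For each c ∈ C, let M(c) denote the (A,B)-zigzag number of the restriction of φ to the fiber X ∩ ({c} × [0,1]) (zigzag sets being taken with respect to the ordering of the second coordinate). Then the set {M(c) : c ∈ C} is bounded. -/
import Mathlib


open Set

/-- Let `X ⊆ C × [0,1]` be a blade space over a compact metric space `C`
(a compact set whose fiber over each `c ∈ C` is `{c} × [0, ρ(c)]`), let `A, B` be nonempty
disjoint closed subsets of a metric space `Y` with `d(A,B) > 0`, and let `φ : X → Y` be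
continuous. Then the `(A,B)`-zigzag numbers `M(c)` of the restrictions of `φ` to the fibers
are uniformly bounded: there is `M ∈ ℕ` such that for each `c ∈ C`, every `(A,B)`-zigzag set
for `φ` restricted to the fiber over `c` has cardinality at most `M`. -/
theorem stmt17 {C : Type*} [MetricSpace C] [CompactSpace C] (X : Set (C × ℝ))
    (hXcomp : IsCompact X) (hXsub : X ⊆ (univ : Set C) ×ˢ Icc (0:ℝ) 1)
    (hblade : ∀ c : C, ∃ ρ ∈ Icc (0:ℝ) 1, {t : ℝ | (c, t) ∈ X} = Icc 0 ρ)
    {Y : Type*} [MetricSpace Y] (A B : Set Y)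
    (hA : A.Nonempty) (hB : B.Nonempty) (hAc : IsClosed A) (hBc : IsClosed B)
    (hAB : Disjoint A B) (hd : ∃ ε > 0, ∀ a ∈ A, ∀ b ∈ B, ε ≤ dist a b)
    (φ : X → Y) (hφ : Continuous φ) :
    ∃ M : ℕ, ∀ (c : C) (m : ℕ) (x : Fin m → ℝ) (hmem : ∀ i, (c, x i) ∈ X),
      StrictMono x →
      ((∀ i : Fin m, (i.val % 2 = 0 → φ ⟨(c, x i), hmem i⟩ ∈ A) ∧
          (i.val % 2 = 1 → φ ⟨(c, x i), hmem i⟩ ∈ B)) ∨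
       (∀ i : Fin m, (i.val % 2 = 0 → φ ⟨(c, x i), hmem i⟩ ∈ B) ∧
          (i.val % 2 = 1 → φ ⟨(c, x i), hmem i⟩ ∈ A))) →
      m ≤ M := by
  obtain ⟨ε, hε, hεd⟩ := hd
  haveI : CompactSpace X := isCompact_iff_compactSpace.mp hXcomp
  have huc : UniformContinuous φ := CompactSpace.uniformContinuous_of_continuous hφ
  rw [Metric.uniformContinuous_iff] at huc
  obtain ⟨δ, hδ, hδε⟩ := huc ε hε
  refine ⟨Nat.ceil (1/δ) + 1, ?_⟩
  intro c m x hmem hsm hzig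
  have key : ∀ (i : ℕ) (h1 : i + 1 < m),
      x ⟨i, Nat.lt_of_succ_lt h1⟩ + δ ≤ x ⟨i + 1, h1⟩ := by
    intro i h1
    set p : X := ⟨(c, x ⟨i, Nat.lt_of_succ_lt h1⟩), hmem _⟩ with hp
    set q : X := ⟨(c, x ⟨i + 1, h1⟩), hmem _⟩ with hq
    have hpar : (i % 2 = 0 ∧ (i + 1) % 2 = 1) ∨ (i % 2 = 1 ∧ (i + 1) % 2 = 0) := by omega
    have hab : ε ≤ dist (φ p) (φ q) := by
      rcases hzig with h | h <;> rcases hpar with ⟨h0, h1'⟩ | ⟨h0, h1'⟩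
      · exact hεd _ ((h _).1 h0) _ ((h _).2 h1')
      · rw [dist_comm]; exact hεd _ ((h _).1 h1') _ ((h _).2 h0)
      · rw [dist_comm]; exact hεd _ ((h _).2 h1') _ ((h _).1 h0)
      · exact hεd _ ((h _).2 h0) _ ((h _).1 h1')
    have hdist : δ ≤ dist p q := by
      by_contra hlt
      push_neg at hlt
      exact absurd (hδε hlt) (not_lt.mpr hab)
    have hlt' : x ⟨i, Nat.lt_of_succ_lt h1⟩ < x ⟨i + 1, h1⟩ := by
      apply hsm
      simp [Fin.lt_def]
    have hde : dist p q = x ⟨i + 1, h1⟩ - x ⟨i, Nat.lt_of_succ_lt h1⟩ := by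
      rw [hp, hq, Subtype.dist_eq, Prod.dist_eq]
      simp only [dist_self, Real.dist_eq]
      rw [abs_of_neg (by linarith), max_eq_right (by linarith)]
      ring
    linarith [hdist, hde ▸ hdist]
  have bound : ∀ (i : ℕ) (h : i < m),
      x ⟨0, Nat.lt_of_le_of_lt (Nat.zero_le _) h⟩ + i * δ ≤ x ⟨i, h⟩ := by
    intro i
    induction i with
    | zero => intro h; simp
    | succ n ih =>
      intro h
      have h2 := key n h
      have h3 := ih (Nat.lt_of_succ_lt h)
      push_cast
      nlinarith [hδ.le]
  rcases Nat.eq_zero_or_pos m with rfl | hm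
  · exact Nat.zero_le _
  · have h0 : (0:ℝ) ≤ x ⟨0, hm⟩ := (hXsub (hmem ⟨0, hm⟩)).2.1
    have hlast : x ⟨m - 1, Nat.sub_lt hm one_pos⟩ ≤ 1 :=
      (hXsub (hmem ⟨m - 1, Nat.sub_lt hm one_pos⟩)).2.2
    have hb := bound (m - 1) (Nat.sub_lt hm one_pos)
    have hmd : ((m : ℝ) - 1) * δ ≤ 1 := by
      have : ((m - 1 : ℕ) : ℝ) = (m : ℝ) - 1 := by
        push_cast [Nat.cast_sub hm]; ring
      rw [← this]; linarith
    have : (m : ℝ) - 1 ≤ 1 / δ := by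
      rw [le_div_iff₀ hδ]; linarith
    have h4 : ((m - 1 : ℕ) : ℝ) ≤ (Nat.ceil (1/δ) : ℝ) := by
      have hc := Nat.le_ceil (1/δ)
      have : ((m - 1 : ℕ) : ℝ) = (m : ℝ) - 1 := by
        push_cast [Nat.cast_sub hm]; ring
      linarith
    have := Nat.cast_le.mp h4
    omega
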